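/- Let λ > 1 be a Salem number of degree 4 with conjugates λ⁻¹, e^{iθ}, e^{-iθ} (θ ∈ (0,π)), and minimal polynomial x⁴ + a·x³ + b·x² + a·x + 1. Set τ = λ·e^{iθ} + λ⁻¹·e^{-iθ}. Then τ satisfies τ² - (b-2)·τ + (a² - 2b) = 0, τ is not real, and the discriminant (b-2)² - 4(a² - 2b) of this quadratic equals (b+2)² - 4a² and is negative. In particular τ is an imaginary quadratic algebraic integer. -/

import Mathlib

open Complex

/-- Let `λ > 1` be a Salem number of degree 4 with conjugates
`λ⁻¹, e^{±iθ}` (`θ ∈ (0,π)`) and minimal polynomial `x⁴ + ax³ + bx² + ax + 1`,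
so that `a = -(λ + λ⁻¹ + 2cos θ)` and `b = 2 + (λ + λ⁻¹)·2cos θ`.
Let `τ = λ·e^{iθ} + λ⁻¹·e^{-iθ}`. Then `τ² - (b-2)τ + (a² - 2b) = 0`, `τ` is not
real, and the discriminant `(b-2)² - 4(a² - 2b)` equals `(b+2)² - 4a²` and is
negative; in particular `τ` is an imaginary quadratic algebraic integer. -/
theorem stmt_4 (lam θ : ℝ) (a b : ℤ)
    (hlam : 1 < lam) (hθ : θ ∈ Set.Ioo 0 Real.pi)
    (ha : (a : ℝ) = -(lam + lam⁻¹ + 2 * Real.cos θ))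
    (hb : (b : ℝ) = 2 + (lam + lam⁻¹) * (2 * Real.cos θ))
    (τ : ℂ)
    (hτ : τ = (lam : ℂ) * Complex.exp (θ * Complex.I) +
        ((lam⁻¹ : ℝ) : ℂ) * Complex.exp (-(θ * Complex.I))) :
    τ ^ 2 - ((b : ℂ) - 2) * τ + ((a : ℂ) ^ 2 - 2 * b) = 0 ∧
    τ.im ≠ 0 ∧
    ((b : ℤ) - 2) ^ 2 - 4 * (a ^ 2 - 2 * b) = (b + 2) ^ 2 - 4 * a ^ 2 ∧
    (b + 2) ^ 2 - 4 * a ^ 2 < 0 := by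
  obtain ⟨hθ1, hθ2⟩ := hθ
  have hsin : 0 < Real.sin θ := Real.sin_pos_of_pos_of_lt_pi hθ1 hθ2
  have hlam0 : (0 : ℝ) < lam := lt_trans one_pos hlam
  have hlamne : (lam : ℂ) ≠ 0 := by exact_mod_cast hlam0.ne'
  have e1 : Complex.exp (θ * Complex.I) =
      (Real.cos θ : ℂ) + (Real.sin θ : ℂ) * Complex.I := by
    rw [Complex.exp_mul_I, Complex.ofReal_cos, Complex.ofReal_sin]
  have e2 : Complex.exp (-(θ * Complex.I)) =
      (Real.cos θ : ℂ) - (Real.sin θ : ℂ) * Complex.I := by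
    rw [← neg_mul, Complex.exp_mul_I, Complex.cos_neg, Complex.sin_neg,
      Complex.ofReal_cos, Complex.ofReal_sin]
    ring
  have hτ' : τ = (lam : ℂ) * ((Real.cos θ : ℂ) + (Real.sin θ : ℂ) * Complex.I) +
      ((lam : ℂ))⁻¹ * ((Real.cos θ : ℂ) - (Real.sin θ : ℂ) * Complex.I) := by
    rw [hτ, e1, e2, Complex.ofReal_inv]
  have haC : (a : ℂ) = -((lam : ℂ) + ((lam : ℂ))⁻¹ + 2 * (Real.cos θ : ℂ)) := by
    have : ((a : ℝ) : ℂ) = ((-(lam + lam⁻¹ + 2 * Real.cos θ) : ℝ) : ℂ) := by rw [ha]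
    push_cast at this
    rw [this, Complex.ofReal_cos]
  have hbC : (b : ℂ) = 2 + ((lam : ℂ) + ((lam : ℂ))⁻¹) * (2 * (Real.cos θ : ℂ)) := by
    have : ((b : ℝ) : ℂ) = ((2 + (lam + lam⁻¹) * (2 * Real.cos θ) : ℝ) : ℂ) := by rw [hb]
    push_cast at this
    rw [this, Complex.ofReal_cos]
  have hL : (lam : ℂ) * ((lam : ℂ))⁻¹ = 1 := mul_inv_cancel₀ hlamne
  have hsc : ((Real.sin θ : ℂ)) ^ 2 = 1 - (Real.cos θ : ℂ) ^ 2 := by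
    rw [← Complex.ofReal_pow, ← Complex.ofReal_pow]
    norm_cast
    linarith [Real.sin_sq_add_cos_sq θ]
  refine ⟨?_, ?_, by ring, ?_⟩
  · rw [hτ', haC, hbC]
    set L : ℂ := (lam : ℂ)
    set c : ℂ := (Real.cos θ : ℂ)
    set s : ℂ := (Real.sin θ : ℂ)
    have hI : Complex.I ^ 2 = -1 := Complex.I_sq
    linear_combination (s ^ 2 * (L - L⁻¹) ^ 2) * hI + (-(L - L⁻¹) ^ 2) * hsc +
      (4 * (1 - c ^ 2)) * hL
  · have him : τ.im = (lam - lam⁻¹) * Real.sin θ := by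
      rw [hτ']
      simp [Complex.add_im, Complex.mul_im, Complex.sub_im, Complex.mul_re,
        Complex.ofReal_re, Complex.ofReal_im, Complex.I_re, Complex.I_im,
        Complex.sin_ofReal_re, Complex.cos_ofReal_re, Complex.inv_re,
        Complex.inv_im, Complex.normSq_ofReal]
      field_simp
      ring
    have hinv : lam⁻¹ < 1 := by
      rw [inv_lt_one_iff₀]; right; exact hlam
    have : 0 < τ.im := by
      rw [him]
      exact mul_pos (by linarith) hsin
    exact this.ne'
  · have hcos2 : Real.cos θ ^ 2 < 1 := by
      nlinarith [Real.sin_sq_add_cos_sq θ]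
    have hsum : 2 < lam + lam⁻¹ := by
      have h1 : 0 < (lam - 1) ^ 2 / lam := div_pos (pow_pos (by linarith) 2) hlam0
      have h2 : lam + lam⁻¹ - 2 = (lam - 1) ^ 2 / lam := by field_simp; ring
      linarith
    have hkey : ((b : ℝ) + 2) ^ 2 - 4 * (a : ℝ) ^ 2 < 0 := by
      rw [ha, hb]
      nlinarith [mul_pos (show (0:ℝ) < (lam + lam⁻¹) ^ 2 - 4 by nlinarith)
        (show (0:ℝ) < 1 - Real.cos θ ^ 2 by linarith)]
    exact_mod_cast hkey
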